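/- Let D be a positive integer with D ≡ 1 (mod 24) that is not a perfect square. Then the sum of σ₁((D − b²)/24) over all integers b with 0 < b < √D and b ≡ 1 or 11 (mod 12) equals the sum of σ₁((D − b²)/24) over all integers b with 0 < b < √D and b ≡ 5 or 7 (mod 12). (For all such b one has b² ≡ 1 (mod 24), so (D − b²)/24 is a positive integer.) -/

import Mathlib

open Finset

/-- The divisor-sum function `σ₁ n = ∑_{0 < d ∣ n} d` (with `σ₁ 0 = 0`). -/
def sigma1 (n : ℕ) : ℕ := ∑ d ∈ n.divisors, d

def DP (m : ℕ) : Finset (Finset ℕ) :=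
  (Finset.range (m+1)).powerset.filter (fun T => (∑ x ∈ T, x) = m ∧ 0 ∉ T)

def Epn (m : ℕ) : ℤ := ∑ T ∈ DP m, (-1) ^ T.card

lemma elem_le_sum {T : Finset ℕ} {x : ℕ} (hx : x ∈ T) : x ≤ ∑ y ∈ T, y :=
  Finset.single_le_sum (f := fun i => i) (fun _ _ => Nat.zero_le _) hx

lemma mem_DP {m : ℕ} {T : Finset ℕ} : T ∈ DP m ↔ (∑ x ∈ T, x) = m ∧ 0 ∉ T := by
  constructor
  · intro h; exact (Finset.mem_filter.mp h).2
  · intro h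
    refine Finset.mem_filter.mpr ⟨Finset.mem_powerset.mpr ?_, h⟩
    intro x hx
    exact Finset.mem_range.mpr (Nat.lt_succ_of_le (h.1 ▸ elem_le_sum hx))

lemma neg_pow_pred {c : ℕ} (hc : 1 ≤ c) : (-1 : ℤ)^(c-1) = -(-1)^c := by
  obtain ⟨k, rfl⟩ : ∃ k, c = k + 1 := ⟨c - 1, by omega⟩
  rw [pow_succ]
  simp

section Conv

variable (M : ℕ)

def Pset : Finset (Finset ℕ) := (Finset.range (M+1)).powerset.filter (fun T => 0 ∉ T)

def Qset (T : Finset ℕ) : Finset (ℕ × ℕ) :=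
  (Finset.range (M+1) ×ˢ Finset.range (M+1)).filter
    (fun q => (∑ x ∈ T, x) + q.1 * q.2 = M ∧ 1 ≤ q.1 ∧ (q.2 = 0 → q.1 ∈ T))

def Vt : Finset (Σ _ : Finset ℕ, ℕ × ℕ) := (Pset M).sigma (Qset M)

lemma mem_Vt {T : Finset ℕ} {d e : ℕ} :
    (⟨T, (d, e)⟩ : Σ _ : Finset ℕ, ℕ × ℕ) ∈ Vt M ↔ (0 ∉ T ∧ T ⊆ Finset.range (M+1)) ∧
      (d < M+1 ∧ e < M+1) ∧
      (∑ x ∈ T, x) + d * e = M ∧ 1 ≤ d ∧ (e = 0 → d ∈ T) := by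
  simp only [Vt, Pset, Qset, Finset.mem_sigma, Finset.mem_filter, Finset.mem_powerset,
    Finset.mem_product, Finset.mem_range]
  tauto

def vmap (p : Σ _ : Finset ℕ, ℕ × ℕ) : Σ _ : Finset ℕ, ℕ × ℕ :=
  if p.2.1 ∈ p.1 then ⟨p.1.erase p.2.1, (p.2.1, p.2.2 + 1)⟩
  else ⟨insert p.2.1 p.1, (p.2.1, p.2.2 - 1)⟩

lemma vsum (hM : 1 ≤ M) : ∑ p ∈ Vt M, ((-1 : ℤ) ^ p.1.card * p.2.1) = 0 := by
  apply Finset.sum_involution (fun p _ => vmap p)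
  · -- f a + f (g a) = 0
    rintro ⟨T, d, e⟩ hp
    obtain ⟨⟨h0, hsub⟩, hrg, hsum, hd, he⟩ := (mem_Vt M).mp hp
    by_cases hdT : d ∈ T
    · simp only [vmap, hdT, if_pos]
      skip
      rw [Finset.card_erase_of_mem hdT,
        neg_pow_pred (Finset.card_pos.mpr ⟨d, hdT⟩ : 1 ≤ T.card)]
      ring
    · simp only [vmap, hdT, if_neg, not_false_iff]
      skip
      rw [Finset.card_insert_of_notMem hdT, pow_succ]
      ring
  · -- g a ≠ a
    rintro ⟨T, d, e⟩ hp _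
    intro h
    by_cases hdT : d ∈ T
    · simp only [vmap, hdT, if_pos] at h
      have h1 : T.erase d = T := congrArg Sigma.fst h
      rw [← h1] at hdT
      exact (Finset.notMem_erase d T) hdT
    · simp only [vmap, hdT, if_neg, not_false_iff] at h
      have h1 : insert d T = T := congrArg Sigma.fst h
      rw [← h1] at hdT
      exact hdT (Finset.mem_insert_self d T)
  · -- g a ∈ s
    rintro ⟨T, d, e⟩ hp
    obtain ⟨⟨h0, hsub⟩, ⟨hd1, he1⟩, hsum, hd, he⟩ := (mem_Vt M).mp hp
    by_cases hdT : d ∈ T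
    · simp only [vmap, hdT, if_pos]
      skip
      apply (mem_Vt M).mpr
      have hdle : d ≤ ∑ x ∈ T, x := elem_le_sum hdT
      have hers : (∑ x ∈ T.erase d, x) + d = ∑ x ∈ T, x := Finset.sum_erase_add T _ hdT
      have hde1 : d * (e + 1) = d * e + d := by ring
      refine ⟨⟨fun hc => h0 (Finset.mem_of_mem_erase hc),
        (Finset.erase_subset d T).trans hsub⟩, ⟨hd1, ?_⟩, by omega, hd, by simp⟩
      have h2 : e + 1 ≤ d * (e+1) := Nat.le_mul_of_pos_left _ hd
      omega
    · simp only [vmap, hdT, if_neg, not_false_iff]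
      skip
      apply (mem_Vt M).mpr
      have he' : 1 ≤ e := by
        rcases Nat.eq_zero_or_pos e with h | h
        · exact absurd (he h) hdT
        · exact h
      have hins : (∑ x ∈ insert d T, x) = d + ∑ x ∈ T, x := Finset.sum_insert hdT
      have hde : d * e = d + d * (e - 1) := by
        obtain ⟨k, rfl⟩ : ∃ k, e = k + 1 := ⟨e - 1, by omega⟩
        simp [Nat.mul_succ, Nat.add_comm]
      have hdM : d ≤ M := by
        have : d ≤ d * e := Nat.le_mul_of_pos_right _ he'
        omega
      refine ⟨⟨?_, ?_⟩, ⟨by omega, by omega⟩, by omega, hd, ?_⟩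
      · intro hc
        rcases Finset.mem_insert.mp hc with h | h
        · omega
        · exact h0 h
      · intro x hx
        rcases Finset.mem_insert.mp hx with h | h
        · subst h; exact Finset.mem_range.mpr (by omega)
        · exact hsub h
      · intro _; exact Finset.mem_insert_self d T
  · -- involution
    rintro ⟨T, d, e⟩ hp
    by_cases hdT : d ∈ T
    · simp only [vmap, hdT, if_pos]
      skip
      simp only [Finset.notMem_erase, if_neg, not_false_iff]
      rw [Finset.insert_erase hdT]
      simp
    · obtain ⟨_, _, _, _, he⟩ := (mem_Vt M).mp hp
      have he' : 1 ≤ e := by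
        rcases Nat.eq_zero_or_pos e with h | h
        · exact absurd (he h) hdT
        · exact h
      simp only [vmap, hdT, if_neg, not_false_iff]
      skip
      simp only [Finset.mem_insert_self, if_pos]
      rw [Finset.erase_insert hdT]
      congr 2
      omega

end Conv

lemma mem_Qset {M : ℕ} {T : Finset ℕ} {q : ℕ × ℕ} :
    q ∈ Qset M T ↔ (q.1 < M+1 ∧ q.2 < M+1) ∧
      (∑ x ∈ T, x) + q.1 * q.2 = M ∧ 1 ≤ q.1 ∧ (q.2 = 0 → q.1 ∈ T) := by
  simp only [Qset, Finset.mem_filter, Finset.mem_product, Finset.mem_range]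

lemma qeval_eq (M : ℕ) {T : Finset ℕ} (hT : T ∈ Pset M)
    (h : (∑ x ∈ T, x) = M) : Qset M T = T.image (fun d => (d, 0)) := by
  obtain ⟨-, h0⟩ := Finset.mem_filter.mp hT
  ext ⟨d, e⟩
  simp only [mem_Qset, Finset.mem_image, Prod.mk.injEq]
  constructor
  · rintro ⟨⟨hd1, he1⟩, hsum, hd, he⟩
    have hde : d * e = 0 := by omega
    have he0 : e = 0 := by
      rcases Nat.mul_eq_zero.mp hde with h' | h'
      · omega
      · exact h'
    exact ⟨d, he (by omega), rfl, he0.symm⟩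
  · rintro ⟨d', hd', rfl, rfl⟩
    have h1 : 1 ≤ d' := by
      rcases Nat.eq_zero_or_pos d' with h' | h'
      · exact absurd (h' ▸ hd') h0
      · exact h'
    have h2 : d' ≤ M := h ▸ elem_le_sum hd'
    exact ⟨⟨by omega, by omega⟩, by omega, h1, fun _ => hd'⟩

lemma qeval_ne (M : ℕ) {T : Finset ℕ} (h : (∑ x ∈ T, x) ≠ M) :
    Qset M T = (M - (∑ x ∈ T, x)).divisorsAntidiagonal := by
  ext ⟨d, e⟩
  simp only [mem_Qset, Nat.mem_divisorsAntidiagonal]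
  constructor
  · rintro ⟨⟨hd1, he1⟩, hsum, hd, he⟩
    constructor
    · omega
    · omega
  · rintro ⟨hde, hne⟩
    have hn : (∑ x ∈ T, x) < M := by omega
    have hd0 : d ≠ 0 := by rintro rfl; simp at hde; omega
    have he0 : e ≠ 0 := by rintro rfl; simp at hde; omega
    have hdle : d ≤ d * e := Nat.le_mul_of_pos_right _ (by omega)
    have hele : e ≤ d * e := Nat.le_mul_of_pos_left _ (by omega)
    refine ⟨⟨by omega, by omega⟩, by omega, by omega, fun h' => absurd h' he0⟩

lemma sigma1_eq_sum_antidiagonal (n : ℕ) :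
    (sigma1 n : ℤ) = ∑ q ∈ n.divisorsAntidiagonal, (q.1 : ℤ) := by
  rw [Nat.sum_divisorsAntidiagonal (fun d _ => (d : ℤ))]
  unfold sigma1
  push_cast
  rfl

lemma conv (M : ℕ) (hM : 1 ≤ M) :
    (∑ m ∈ Finset.range (M+1), Epn m * sigma1 (M-m)) + Epn M * M = 0 := by
  have key := vsum M hM
  rw [Vt, Finset.sum_sigma] at key
  have inner : ∀ T ∈ Pset M, (∑ q ∈ Qset M T, ((-1:ℤ) ^ T.card * q.1))
      = (-1:ℤ)^T.card * (sigma1 (M - ∑ x ∈ T, x))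
        + (if (∑ x ∈ T, x) = M then ((-1:ℤ)^T.card * M) else 0) := by
    intro T hT
    rw [← Finset.mul_sum]
    by_cases h : (∑ x ∈ T, x) = M
    · rw [qeval_eq M hT h, if_pos h,
        Finset.sum_image (fun x _ y _ hxy => (Prod.ext_iff.mp hxy).1)]
      have h0 : sigma1 (M - ∑ x ∈ T, x) = 0 := by simp [h, sigma1]
      rw [h0]
      have h1 : ∑ x ∈ T, (((x, 0) : ℕ × ℕ).1 : ℤ) = ((∑ x ∈ T, x : ℕ) : ℤ) := by
        push_cast
        rfl
      rw [h1, h]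
      ring
    · rw [qeval_ne M h, if_neg h, ← sigma1_eq_sum_antidiagonal]
      ring
  have key2 : ∑ T ∈ Pset M, ∑ q ∈ Qset M T, ((-1:ℤ) ^ T.card * q.1) = 0 := key
  rw [Finset.sum_congr rfl inner, Finset.sum_add_distrib, ← Finset.sum_filter] at key2
  have hPD : (Pset M).filter (fun T => (∑ x ∈ T, x) = M) = DP M := by
    ext T
    simp only [Pset, Finset.mem_filter, Finset.mem_powerset, mem_DP]
    constructor
    · rintro ⟨⟨-, h0⟩, hs⟩; exact ⟨hs, h0⟩
    · rintro ⟨hs, h0⟩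
      refine ⟨⟨fun x hx => Finset.mem_range.mpr ?_, h0⟩, hs⟩
      have := elem_le_sum hx
      omega
  rw [hPD, ← Finset.sum_mul] at key2
  have split := Finset.sum_filter_add_sum_filter_not (Pset M)
    (fun T => (∑ x ∈ T, x) ≤ M) (fun T => (-1:ℤ)^T.card * sigma1 (M - ∑ x ∈ T, x))
  have hzero : ∑ T ∈ (Pset M).filter (fun T => ¬ (∑ x ∈ T, x) ≤ M),
      ((-1:ℤ)^T.card * sigma1 (M - ∑ x ∈ T, x)) = 0 := by
    apply Finset.sum_eq_zero
    intro T hT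
    obtain ⟨-, hgt⟩ := Finset.mem_filter.mp hT
    have : M - (∑ x ∈ T, x) = 0 := by omega
    rw [this]
    have : sigma1 0 = 0 := by simp [sigma1]
    rw [this]
    simp
  have hmap : ∀ T ∈ (Pset M).filter (fun T => (∑ x ∈ T, x) ≤ M),
      (∑ x ∈ T, x) ∈ Finset.range (M+1) := by
    intro T hT
    exact Finset.mem_range.mpr (Nat.lt_succ_of_le (Finset.mem_filter.mp hT).2)
  have fib := Finset.sum_fiberwise_of_maps_to hmap
    (fun T => (-1:ℤ)^T.card * sigma1 (M - ∑ x ∈ T, x))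
  have hfib : ∀ m ∈ Finset.range (M+1),
      (∑ T ∈ ((Pset M).filter (fun T => (∑ x ∈ T, x) ≤ M)).filter
          (fun T => (∑ x ∈ T, x) = m), ((-1:ℤ)^T.card * sigma1 (M - ∑ x ∈ T, x)))
        = Epn m * sigma1 (M - m) := by
    intro m hm
    have hDm : ((Pset M).filter (fun T => (∑ x ∈ T, x) ≤ M)).filter
        (fun T => (∑ x ∈ T, x) = m) = DP m := by
      ext T
      simp only [Pset, Finset.mem_filter, Finset.mem_powerset, mem_DP]
      constructor
      · rintro ⟨⟨⟨-, h0⟩, -⟩, hs⟩; exact ⟨hs, h0⟩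
      · rintro ⟨hs, h0⟩
        have hmM : m ≤ M := by
          have := Finset.mem_range.mp hm; omega
        refine ⟨⟨⟨fun x hx => Finset.mem_range.mpr ?_, h0⟩, by omega⟩, hs⟩
        have := elem_le_sum hx
        omega
    rw [hDm]
    rw [Finset.sum_congr rfl (fun T hT => by rw [(mem_DP.mp hT).1]), ← Finset.sum_mul]
    rfl
  rw [Finset.sum_congr rfl hfib] at fib
  rw [← split, hzero, add_zero, ← fib] at key2
  exact key2


def amax (T : Finset ℕ) : ℕ := if h : T.Nonempty then T.max' h else 0
def smin (T : Finset ℕ) : ℕ := if h : T.Nonempty then T.min' h else 0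
def stair (T : Finset ℕ) : ℕ := Nat.findGreatest (fun i => ∀ j < i, amax T - j ∈ T) (amax T)

def opA (T : Finset ℕ) : Finset ℕ :=
  (T.erase (smin T)).image (fun x => if amax T - smin T < x then x + 1 else x)
def opB (T : Finset ℕ) : Finset ℕ :=
  insert (stair T) (T.image fun x => if amax T - stair T < x then x - 1 else x)
def franklin (T : Finset ℕ) : Finset ℕ := if smin T ≤ stair T then opA T else opB T

def Exc (T : Finset ℕ) : Prop :=
  (smin T ≤ stair T ∧ amax T = 2 * smin T - 1) ∨ (stair T < smin T ∧ amax T = 2 * stair T)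

instance : DecidablePred Exc := fun T => by unfold Exc; infer_instance

section Base
variable {T : Finset ℕ}

lemma amax_mem (hne : T.Nonempty) : amax T ∈ T := by rw [amax, dif_pos hne]; exact T.max'_mem hne
lemma smin_mem (hne : T.Nonempty) : smin T ∈ T := by rw [smin, dif_pos hne]; exact T.min'_mem hne
lemma le_amax {x : ℕ} (hx : x ∈ T) : x ≤ amax T := by
  rw [amax, dif_pos ⟨x, hx⟩]; exact T.le_max' x hx
lemma smin_le {x : ℕ} (hx : x ∈ T) : smin T ≤ x := by
  rw [smin, dif_pos ⟨x, hx⟩]; exact T.min'_le x hx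
lemma amax_eq {x : ℕ} (hx : x ∈ T) (h : ∀ y ∈ T, y ≤ x) : amax T = x :=
  le_antisymm (by rw [amax, dif_pos ⟨x, hx⟩]; exact Finset.max'_le _ _ _ h) (le_amax hx)
lemma smin_eq {x : ℕ} (hx : x ∈ T) (h : ∀ y ∈ T, x ≤ y) : smin T = x :=
  le_antisymm (smin_le hx) (by rw [smin, dif_pos ⟨x, hx⟩]; exact Finset.le_min' _ _ _ h)

lemma amax_pos (hne : T.Nonempty) (h0 : 0 ∉ T) : 1 ≤ amax T := by
  rcases Nat.eq_zero_or_pos (amax T) with h | h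
  · exact absurd (h ▸ amax_mem hne) h0
  · exact h
lemma smin_pos (hne : T.Nonempty) (h0 : 0 ∉ T) : 1 ≤ smin T := by
  rcases Nat.eq_zero_or_pos (smin T) with h | h
  · exact absurd (h ▸ smin_mem hne) h0
  · exact h

lemma stair_pos (hne : T.Nonempty) (h0 : 0 ∉ T) : 1 ≤ stair T :=
  Nat.le_findGreatest (amax_pos hne h0) (fun j hj => by
    interval_cases j
    simpa using amax_mem hne)

lemma stair_le_amax : stair T ≤ amax T := Nat.findGreatest_le _

lemma stair_spec : ∀ j < stair T, amax T - j ∈ T := by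
  unfold stair
  exact Nat.findGreatest_spec (P := fun i => ∀ j < i, amax T - j ∈ T) (Nat.zero_le _)
    (fun j hj => absurd hj (Nat.not_lt_zero _))

lemma stair_mem {j : ℕ} (hj : j < stair T) : amax T - j ∈ T := stair_spec j hj

lemma stair_gap (h0 : 0 ∉ T) : amax T - stair T ∉ T := by
  rcases eq_or_lt_of_le (stair_le_amax (T := T)) with h | h
  · rw [h]; simpa using h0
  · intro hc
    have hgr := Nat.findGreatest_is_greatest (P := fun i => ∀ j < i, amax T - j ∈ T)
      (n := amax T) (k := stair T + 1) (by unfold stair; omega) (by omega)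
    apply hgr
    intro j hj
    rcases Nat.lt_or_ge j (stair T) with h' | h'
    · exact stair_mem h'
    · have hje : j = stair T := by omega
      rw [hje]; exact hc

lemma stair_eq {k : ℕ} (hk : k ≤ amax T) (h1 : ∀ j < k, amax T - j ∈ T)
    (h2 : amax T - k ∉ T) : stair T = k := by
  refine le_antisymm ?_ (Nat.le_findGreatest hk h1)
  by_contra hlt
  push_neg at hlt
  exact h2 (stair_spec k hlt)

lemma top_filter {k : ℕ} (hk : k ≤ stair T) :
    T.filter (fun x => amax T - k < x) = Finset.Icc (amax T - k + 1) (amax T) := by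
  have hka : k ≤ amax T := hk.trans (stair_le_amax)
  ext x
  simp only [Finset.mem_filter, Finset.mem_Icc]
  constructor
  · rintro ⟨hx, hgt⟩
    exact ⟨by omega, le_amax hx⟩
  · rintro ⟨h1, h2⟩
    have hj : amax T - (amax T - x) = x := by omega
    have : amax T - x < k := by omega
    refine ⟨hj ▸ stair_mem (lt_of_lt_of_le this hk), by omega⟩

end Base

lemma ite_strictMono (c : ℕ) : StrictMono (fun x => if c < x then x + 1 else x) := by
  intro x y h
  dsimp only
  split_ifs <;> omega

section StepA
variable {T : Finset ℕ}

lemma A_s_lt_a (hne : T.Nonempty) (h0 : 0 ∉ T) (hsL : smin T ≤ stair T) (hnx : 2 * smin T ≤ amax T) : smin T < amax T := by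
  have := smin_pos hne h0; omega

lemma A_amax_ne_smin (hne : T.Nonempty) (h0 : 0 ∉ T) (hsL : smin T ≤ stair T) (hnx : 2 * smin T ≤ amax T) : amax T ≠ smin T := by
  have := A_s_lt_a hne h0 hsL hnx; omega

lemma A_mem {x : ℕ} :
    x ∈ opA T ↔ ∃ y, (y ∈ T ∧ y ≠ smin T) ∧
      (if amax T - smin T < y then y + 1 else y) = x := by
  simp only [opA, Finset.mem_image, Finset.mem_erase]
  constructor
  · rintro ⟨y, hy, rfl⟩; exact ⟨y, ⟨hy.2, hy.1⟩, rfl⟩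
  · rintro ⟨y, ⟨h1, h2⟩, rfl⟩; exact ⟨y, ⟨h2, h1⟩, rfl⟩

lemma A_nonempty (hne : T.Nonempty) (h0 : 0 ∉ T) (hsL : smin T ≤ stair T) (hnx : 2 * smin T ≤ amax T) : (opA T).Nonempty := by
  refine ⟨if amax T - smin T < amax T then amax T + 1 else amax T, ?_⟩
  exact (A_mem (T := T)).mpr ⟨amax T, ⟨amax_mem hne, A_amax_ne_smin hne h0 hsL hnx⟩, rfl⟩

lemma A_zero (hne : T.Nonempty) (h0 : 0 ∉ T) (hsL : smin T ≤ stair T) (hnx : 2 * smin T ≤ amax T) : 0 ∉ opA T := by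
  rw [A_mem]
  rintro ⟨y, ⟨hy, -⟩, hf⟩
  have hy1 : 1 ≤ y := by
    rcases Nat.eq_zero_or_pos y with h | h
    · exact absurd (h ▸ hy) h0
    · exact h
  split_ifs at hf <;> omega

lemma A_card (hne : T.Nonempty) (h0 : 0 ∉ T) (hsL : smin T ≤ stair T) (hnx : 2 * smin T ≤ amax T) : (opA T).card + 1 = T.card := by
  rw [opA, Finset.card_image_of_injective _ (ite_strictMono _).injective,
    Finset.card_erase_of_mem (smin_mem hne)]
  have : 1 ≤ T.card := Finset.card_pos.mpr hne
  omega

lemma A_filter_eq (hne : T.Nonempty) (h0 : 0 ∉ T) (hsL : smin T ≤ stair T) (hnx : 2 * smin T ≤ amax T) : (T.erase (smin T)).filter (fun x => amax T - smin T < x)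
    = Finset.Icc (amax T - smin T + 1) (amax T) := by
  rw [← top_filter hsL]
  ext x
  simp only [Finset.mem_filter, Finset.mem_erase]
  constructor
  · rintro ⟨⟨-, h1⟩, h2⟩; exact ⟨h1, h2⟩
  · rintro ⟨h1, h2⟩
    have hs := smin_pos hne h0
    refine ⟨⟨?_, h1⟩, h2⟩
    omega

lemma A_sum (hne : T.Nonempty) (h0 : 0 ∉ T) (hsL : smin T ≤ stair T) (hnx : 2 * smin T ≤ amax T) : (∑ x ∈ opA T, x) = ∑ x ∈ T, x := by
  rw [opA, Finset.sum_image (fun x _ y _ h => (ite_strictMono _).injective h)]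
  have hsplit : ∀ x ∈ T.erase (smin T),
      (if amax T - smin T < x then x + 1 else x) = x + (if amax T - smin T < x then 1 else 0) := by
    intro x _; split_ifs <;> omega
  rw [Finset.sum_congr rfl hsplit, Finset.sum_add_distrib, ← Finset.sum_filter, A_filter_eq hne h0 hsL hnx]
  have hcard : ∑ _x ∈ Finset.Icc (amax T - smin T + 1) (amax T), 1
      = smin T := by
    rw [Finset.sum_const, smul_eq_mul, mul_one, Nat.card_Icc]
    have h1 : smin T ≤ amax T := le_of_lt (A_s_lt_a hne h0 hsL hnx)
    omega
  rw [hcard]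
  have h2 : (∑ x ∈ T.erase (smin T), x) + smin T = ∑ x ∈ T, x := by
    simpa using Finset.sum_erase_add T (fun x => x) (smin_mem hne)
  omega

lemma A_amax (hne : T.Nonempty) (h0 : 0 ∉ T) (hsL : smin T ≤ stair T) (hnx : 2 * smin T ≤ amax T) : amax (opA T) = amax T + 1 := by
  apply amax_eq
  · exact (A_mem (T := T)).mpr ⟨amax T, ⟨amax_mem hne, A_amax_ne_smin hne h0 hsL hnx⟩, by
      have := A_s_lt_a hne h0 hsL hnx
      have := smin_pos hne h0
      rw [if_pos (by omega)]⟩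
  · intro y hy
    obtain ⟨x, ⟨hx, -⟩, rfl⟩ := (A_mem (T := T)).mp hy
    have := le_amax hx
    split_ifs <;> omega

lemma A_stair (hne : T.Nonempty) (h0 : 0 ∉ T) (hsL : smin T ≤ stair T) (hnx : 2 * smin T ≤ amax T) : stair (opA T) = smin T := by
  have ha := A_s_lt_a hne h0 hsL hnx
  have hs := smin_pos hne h0
  apply stair_eq
  · rw [A_amax hne h0 hsL hnx]; omega
  · intro j hj
    rw [A_amax hne h0 hsL hnx]
    refine (A_mem (T := T)).mpr ⟨amax T - j, ⟨stair_mem (lt_of_lt_of_le hj hsL), by omega⟩, ?_⟩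
    rw [if_pos (by omega)]
    omega
  · rw [A_amax hne h0 hsL hnx, A_mem]
    rintro ⟨y, ⟨hy, hys⟩, hf⟩
    have := smin_le hy
    split_ifs at hf <;> omega

lemma A_smin (hne : T.Nonempty) (h0 : 0 ∉ T) (hsL : smin T ≤ stair T) (hnx : 2 * smin T ≤ amax T) : smin T + 1 ≤ smin (opA T) := by
  have h1 : smin (opA T) ∈ opA T := smin_mem (A_nonempty hne h0 hsL hnx)
  obtain ⟨y, ⟨hy, hys⟩, hf⟩ := (A_mem (T := T)).mp h1
  have := smin_le hy
  split_ifs at hf <;> omega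

lemma A_not_exc (hne : T.Nonempty) (h0 : 0 ∉ T) (hsL : smin T ≤ stair T) (hnx : 2 * smin T ≤ amax T) : ¬ Exc (opA T) := by
  rintro (⟨h1, -⟩ | ⟨-, h2⟩)
  · have := A_smin hne h0 hsL hnx
    have := A_stair hne h0 hsL hnx
    omega
  · rw [A_stair hne h0 hsL hnx, A_amax hne h0 hsL hnx] at h2
    omega

lemma A_BA (hne : T.Nonempty) (h0 : 0 ∉ T) (hsL : smin T ≤ stair T) (hnx : 2 * smin T ≤ amax T) : opB (opA T) = T := by
  rw [opB, A_stair hne h0 hsL hnx, A_amax hne h0 hsL hnx, opA, Finset.image_image]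
  have hs := smin_pos hne h0
  have ha := A_s_lt_a hne h0 hsL hnx
  have hc : amax T + 1 - smin T = (amax T - smin T) + 1 := by omega
  have himg : ∀ x ∈ T.erase (smin T),
      ((fun x => if amax T + 1 - smin T < x then x - 1 else x) ∘
        (fun x => if amax T - smin T < x then x + 1 else x)) x = x := by
    intro x hx
    simp only [Function.comp]
    rw [hc]
    split_ifs <;> omega
  rw [Finset.image_congr himg]
  -- now : insert (smin T) ((T.erase (smin T)).image id) = T
  rw [Finset.image_id']
  exact Finset.insert_erase (smin_mem hne)

end StepA

section StepB
variable {T : Finset ℕ}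

lemma B_mem {x : ℕ} : x ∈ opB T ↔ x = stair T ∨
    ∃ y, y ∈ T ∧ (if amax T - stair T < y then y - 1 else y) = x := by
  simp only [opB, Finset.mem_insert, Finset.mem_image]

lemma B_inj (hne : T.Nonempty) (h0 : 0 ∉ T) :
    ∀ x ∈ T, ∀ y ∈ T, (if amax T - stair T < x then x - 1 else x)
      = (if amax T - stair T < y then y - 1 else y) → x = y := by
  have hgap := stair_gap (T := T) h0
  intro x hx y hy h
  have hx1 : x ≠ amax T - stair T := fun hc => hgap (hc ▸ hx)
  have hy1 : y ≠ amax T - stair T := fun hc => hgap (hc ▸ hy)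
  split_ifs at h <;> omega

lemma B_image_gt (hne : T.Nonempty) (h0 : 0 ∉ T) (hLs : stair T < smin T)
    (hnx : 2 * stair T + 1 ≤ amax T) :
    ∀ y ∈ T.image (fun x => if amax T - stair T < x then x - 1 else x), stair T < y := by
  have hLa := stair_le_amax (T := T)
  intro y hy
  obtain ⟨x, hx, rfl⟩ := Finset.mem_image.mp hy
  have := smin_le hx
  split_ifs <;> omega

lemma B_L_notin (hne : T.Nonempty) (h0 : 0 ∉ T) (hLs : stair T < smin T)
    (hnx : 2 * stair T + 1 ≤ amax T) :
    stair T ∉ T.image (fun x => if amax T - stair T < x then x - 1 else x) := by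
  intro hc
  exact absurd rfl (Nat.ne_of_gt (B_image_gt hne h0 hLs hnx _ hc))

lemma B_nonempty : (opB T).Nonempty := ⟨stair T, Finset.mem_insert_self _ _⟩

lemma B_zero (hne : T.Nonempty) (h0 : 0 ∉ T) (hLs : stair T < smin T)
    (hnx : 2 * stair T + 1 ≤ amax T) : 0 ∉ opB T := by
  rw [B_mem]
  have hL := stair_pos hne h0
  have hLa := stair_le_amax (T := T)
  have hc : stair T + 1 ≤ amax T - stair T := by omega
  rintro (h | ⟨y, hy, hf⟩)
  · omega
  · have hy1 : 1 ≤ y := by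
      rcases Nat.eq_zero_or_pos y with h' | h'
      · exact absurd (h' ▸ hy) h0
      · exact h'
    have hgap := stair_gap (T := T) h0
    have : y ≠ amax T - stair T := fun hc => hgap (hc ▸ hy)
    split_ifs at hf <;> omega

lemma B_card (hne : T.Nonempty) (h0 : 0 ∉ T) (hLs : stair T < smin T)
    (hnx : 2 * stair T + 1 ≤ amax T) : (opB T).card = T.card + 1 := by
  rw [opB, Finset.card_insert_of_notMem (B_L_notin hne h0 hLs hnx),
    Finset.card_image_of_injOn (fun x hx y hy h => B_inj hne h0 x hx y hy h)]

lemma B_sum (hne : T.Nonempty) (h0 : 0 ∉ T) (hLs : stair T < smin T)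
    (hnx : 2 * stair T + 1 ≤ amax T) : (∑ x ∈ opB T, x) = ∑ x ∈ T, x := by
  have hLa := stair_le_amax (T := T)
  have hL := stair_pos hne h0
  rw [opB, Finset.sum_insert (B_L_notin hne h0 hLs hnx),
    Finset.sum_image (fun x hx y hy h => B_inj hne h0 x hx y hy h)]
  have hgap := stair_gap (T := T) h0
  have hpt : ∀ x ∈ T, (if amax T - stair T < x then x - 1 else x)
      + (if amax T - stair T < x then 1 else 0) = x := by
    intro x hx
    have : x ≠ amax T - stair T := fun hc => hgap (hc ▸ hx)
    split_ifs <;> omega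
  have h1 : (∑ x ∈ T, ((if amax T - stair T < x then x - 1 else x)
      + (if amax T - stair T < x then 1 else 0))) = ∑ x ∈ T, x := Finset.sum_congr rfl hpt
  rw [Finset.sum_add_distrib, ← Finset.sum_filter, top_filter (le_refl (stair T)),
    Finset.sum_const, smul_eq_mul, mul_one, Nat.card_Icc] at h1
  omega

lemma B_amax (hne : T.Nonempty) (h0 : 0 ∉ T) (hLs : stair T < smin T)
    (hnx : 2 * stair T + 1 ≤ amax T) : amax (opB T) = amax T - 1 := by
  have hLa := stair_le_amax (T := T)
  have hL := stair_pos hne h0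
  apply amax_eq
  · refine B_mem.mpr (Or.inr ⟨amax T, amax_mem hne, ?_⟩)
    rw [if_pos (by omega)]
  · intro y hy
    rcases B_mem.mp hy with h | ⟨x, hx, rfl⟩
    · omega
    · have := le_amax hx
      split_ifs <;> omega

lemma B_smin (hne : T.Nonempty) (h0 : 0 ∉ T) (hLs : stair T < smin T)
    (hnx : 2 * stair T + 1 ≤ amax T) : smin (opB T) = stair T := by
  apply smin_eq (Finset.mem_insert_self _ _)
  intro y hy
  rcases Finset.mem_insert.mp hy with h | h
  · omega
  · exact le_of_lt (B_image_gt hne h0 hLs hnx y h)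

lemma B_stair_ge (hne : T.Nonempty) (h0 : 0 ∉ T) (hLs : stair T < smin T)
    (hnx : 2 * stair T + 1 ≤ amax T) : stair T ≤ stair (opB T) := by
  have hLa := stair_le_amax (T := T)
  have hL := stair_pos hne h0
  apply Nat.le_findGreatest
  · rw [B_amax hne h0 hLs hnx]; omega
  · intro j hj
    rw [B_amax hne h0 hLs hnx]
    refine B_mem.mpr (Or.inr ⟨amax T - j, stair_mem hj, ?_⟩)
    rw [if_pos (by omega)]
    omega

lemma B_not_exc (hne : T.Nonempty) (h0 : 0 ∉ T) (hLs : stair T < smin T)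
    (hnx : 2 * stair T + 1 ≤ amax T) : ¬ Exc (opB T) := by
  have h1 := B_smin hne h0 hLs hnx
  have h2 := B_amax hne h0 hLs hnx
  have h3 := B_stair_ge hne h0 hLs hnx
  have hL := stair_pos hne h0
  rintro (⟨-, h⟩ | ⟨h, -⟩) <;> omega

lemma B_AB (hne : T.Nonempty) (h0 : 0 ∉ T) (hLs : stair T < smin T)
    (hnx : 2 * stair T + 1 ≤ amax T) : opA (opB T) = T := by
  have hLa := stair_le_amax (T := T)
  have hL := stair_pos hne h0
  have hgap := stair_gap (T := T) h0
  rw [opA, B_smin hne h0 hLs hnx, B_amax hne h0 hLs hnx, opB,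
    Finset.erase_insert (B_L_notin hne h0 hLs hnx), Finset.image_image]
  have himg : ∀ x ∈ T,
      ((fun x => if amax T - 1 - stair T < x then x + 1 else x) ∘
        (fun x => if amax T - stair T < x then x - 1 else x)) x = x := by
    intro x hx
    have hx1 : x ≠ amax T - stair T := fun hc => hgap (hc ▸ hx)
    have hx2 : 1 ≤ x := by
      rcases Nat.eq_zero_or_pos x with h' | h'
      · exact absurd (h' ▸ hx) h0
      · exact h'
    simp only [Function.comp]
    split_ifs <;> omega
  rw [Finset.image_congr himg, Finset.image_id']

end StepB

section FranklinWrap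
variable {T : Finset ℕ}

lemma bridgeA (hne : T.Nonempty) (h0 : 0 ∉ T) (hn : ¬ Exc T) (hsL : smin T ≤ stair T) :
    2 * smin T ≤ amax T := by
  have hs := smin_pos hne h0
  have h1 : amax T - (smin T - 1) ∈ T := stair_mem (by omega)
  have h2 := smin_le h1
  have h3 := stair_le_amax (T := T)
  have h4 : amax T ≠ 2 * smin T - 1 := fun hc => hn (Or.inl ⟨hsL, hc⟩)
  omega

lemma bridgeB (hne : T.Nonempty) (h0 : 0 ∉ T) (hn : ¬ Exc T) (hLs : stair T < smin T) :
    2 * stair T + 1 ≤ amax T := by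
  have hL := stair_pos hne h0
  have h1 : amax T - (stair T - 1) ∈ T := stair_mem (by omega)
  have h2 := smin_le h1
  have h3 := stair_le_amax (T := T)
  have h4 : amax T ≠ 2 * stair T := fun hc => hn (Or.inr ⟨hLs, hc⟩)
  omega

lemma franklin_sum (hne : T.Nonempty) (h0 : 0 ∉ T) (hn : ¬ Exc T) :
    (∑ x ∈ franklin T, x) = ∑ x ∈ T, x := by
  rw [franklin]
  by_cases h : smin T ≤ stair T
  · rw [if_pos h]; exact A_sum hne h0 h (bridgeA hne h0 hn h)
  · rw [if_neg h]; exact B_sum hne h0 (by omega) (bridgeB hne h0 hn (by omega))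

lemma franklin_zero (hne : T.Nonempty) (h0 : 0 ∉ T) (hn : ¬ Exc T) : 0 ∉ franklin T := by
  rw [franklin]
  by_cases h : smin T ≤ stair T
  · rw [if_pos h]; exact A_zero hne h0 h (bridgeA hne h0 hn h)
  · rw [if_neg h]; exact B_zero hne h0 (by omega) (bridgeB hne h0 hn (by omega))

lemma franklin_not_exc (hne : T.Nonempty) (h0 : 0 ∉ T) (hn : ¬ Exc T) :
    ¬ Exc (franklin T) := by
  rw [franklin]
  by_cases h : smin T ≤ stair T
  · rw [if_pos h]; exact A_not_exc hne h0 h (bridgeA hne h0 hn h)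
  · rw [if_neg h]; exact B_not_exc hne h0 (by omega) (bridgeB hne h0 hn (by omega))

lemma franklin_card (hne : T.Nonempty) (h0 : 0 ∉ T) (hn : ¬ Exc T) :
    (franklin T).card + 1 = T.card ∨ (franklin T).card = T.card + 1 := by
  rw [franklin]
  by_cases h : smin T ≤ stair T
  · rw [if_pos h]; exact Or.inl (A_card hne h0 h (bridgeA hne h0 hn h))
  · rw [if_neg h]; exact Or.inr (B_card hne h0 (by omega) (bridgeB hne h0 hn (by omega)))

lemma franklin_franklin (hne : T.Nonempty) (h0 : 0 ∉ T) (hn : ¬ Exc T) :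
    franklin (franklin T) = T := by
  by_cases h : smin T ≤ stair T
  · have hnx := bridgeA hne h0 hn h
    have hfT : franklin T = opA T := by rw [franklin, if_pos h]
    rw [hfT, franklin, if_neg (by
      have h1 := A_smin hne h0 h hnx
      have h2 := A_stair hne h0 h hnx
      omega)]
    exact A_BA hne h0 h hnx
  · have hnx := bridgeB hne h0 hn (by omega)
    have hfT : franklin T = opB T := by rw [franklin, if_neg h]
    rw [hfT, franklin, if_pos (by
      have h1 := B_smin hne h0 (by omega) hnx
      have h2 := B_stair_ge hne h0 (by omega) hnx
      omega)]
    exact B_AB hne h0 (by omega) hnx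

end FranklinWrap

section Shapes

lemma Icc_insert_top (u n : ℕ) (h : u ≤ u + n + 1) :
    Finset.Icc u (u + n + 1) = insert (u + n + 1) (Finset.Icc u (u + n)) := by
  ext x
  simp only [Finset.mem_Icc, Finset.mem_insert]
  omega

lemma sum_Icc_gauss (u n : ℕ) : (∑ x ∈ Finset.Icc u (u + n), x) * 2 = (2*u + n) * (n + 1) := by
  induction n with
  | zero => simp [mul_comm]
  | succ n ih =>
    rw [show u + (n + 1) = u + n + 1 from rfl, Icc_insert_top u n (by omega),
      Finset.sum_insert (by simp only [Finset.mem_Icc]; omega)]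
    ring_nf
    ring_nf at ih
    omega

lemma amax_Icc {u v : ℕ} (h : u ≤ v) : amax (Finset.Icc u v) = v :=
  amax_eq (Finset.mem_Icc.mpr ⟨h, le_rfl⟩) (fun y hy => (Finset.mem_Icc.mp hy).2)

lemma smin_Icc {u v : ℕ} (h : u ≤ v) : smin (Finset.Icc u v) = u :=
  smin_eq (Finset.mem_Icc.mpr ⟨le_rfl, h⟩) (fun y hy => (Finset.mem_Icc.mp hy).1)

lemma stair_Icc {u v : ℕ} (h1 : 1 ≤ u) (h : u ≤ v) : stair (Finset.Icc u v) = v + 1 - u := by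
  have ha := amax_Icc h
  apply stair_eq
  · omega
  · intro j hj
    rw [ha, Finset.mem_Icc]
    omega
  · rw [ha, Finset.mem_Icc]
    omega

lemma exc_shape (T : Finset ℕ) (hne : T.Nonempty) (h0 : 0 ∉ T) (hx : Exc T) :
    ∃ t, T = Finset.Icc (t+1) (2*t+1) ∨ T = Finset.Icc (t+2) (2*t+2) := by
  have hs := smin_pos hne h0
  have hL := stair_pos hne h0
  have hLa := stair_le_amax (T := T)
  rcases hx with ⟨hsL, ha⟩ | ⟨hLs, ha⟩
  · refine ⟨smin T - 1, Or.inl ?_⟩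
    have hT : T = Finset.Icc (smin T) (amax T) := by
      ext x
      simp only [Finset.mem_Icc]
      constructor
      · intro hx'; exact ⟨smin_le hx', le_amax hx'⟩
      · rintro ⟨h1, h2⟩
        have hj : amax T - (amax T - x) = x := by omega
        have : amax T - x < smin T := by omega
        exact hj ▸ stair_mem (by omega)
    have h1 : smin T - 1 + 1 = smin T := by omega
    have h2 : 2 * (smin T - 1) + 1 = amax T := by omega
    rw [h1, h2]
    exact hT
  · refine ⟨stair T - 1, Or.inr ?_⟩
    have hT : T = Finset.Icc (stair T + 1) (amax T) := by
      ext x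
      simp only [Finset.mem_Icc]
      constructor
      · intro hx'
        have := smin_le hx'
        exact ⟨by omega, le_amax hx'⟩
      · rintro ⟨h1, h2⟩
        have hj : amax T - (amax T - x) = x := by omega
        have : amax T - x < stair T := by omega
        exact hj ▸ stair_mem (by omega)
    have h1 : stair T - 1 + 2 = stair T + 1 := by omega
    have h2 : 2 * (stair T - 1) + 2 = amax T := by omega
    rw [h1, h2]
    exact hT

lemma shape1_exc (t : ℕ) : Exc (Finset.Icc (t+1) (2*t+1)) := by
  refine Or.inl ⟨?_, ?_⟩
  · rw [smin_Icc (by omega), stair_Icc (by omega) (by omega)]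
    omega
  · rw [amax_Icc (by omega), smin_Icc (by omega)]
    omega

lemma shape2_exc (t : ℕ) : Exc (Finset.Icc (t+2) (2*t+2)) := by
  refine Or.inr ⟨?_, ?_⟩
  · rw [smin_Icc (by omega), stair_Icc (by omega) (by omega)]
    omega
  · rw [amax_Icc (by omega), stair_Icc (by omega) (by omega)]
    omega

lemma shape1_sum (t : ℕ) : (∑ x ∈ Finset.Icc (t+1) (2*t+1), x) * 2 = (3*t+2) * (t+1) := by
  have := sum_Icc_gauss (t+1) t
  have he : t + 1 + t = 2*t+1 := by omega
  rw [he] at this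
  rw [this]
  ring

lemma shape2_sum (t : ℕ) : (∑ x ∈ Finset.Icc (t+2) (2*t+2), x) * 2 = (3*t+4) * (t+1) := by
  have := sum_Icc_gauss (t+2) t
  have he : t + 2 + t = 2*t+2 := by omega
  rw [he] at this
  rw [this]
  ring

lemma shape1_card (t : ℕ) : (Finset.Icc (t+1) (2*t+1)).card = t + 1 := by
  rw [Nat.card_Icc]; omega

lemma shape2_card (t : ℕ) : (Finset.Icc (t+2) (2*t+2)).card = t + 1 := by
  rw [Nat.card_Icc]; omega

lemma shape1_zero (t : ℕ) : 0 ∉ Finset.Icc (t+1) (2*t+1) := by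
  simp only [Finset.mem_Icc]; omega

lemma shape2_zero (t : ℕ) : 0 ∉ Finset.Icc (t+2) (2*t+2) := by
  simp only [Finset.mem_Icc]; omega

end Shapes

lemma DP_nonempty {m : ℕ} {T : Finset ℕ} (hm : 1 ≤ m) (hT : T ∈ DP m) : T.Nonempty := by
  rcases Finset.eq_empty_or_nonempty T with rfl | h
  · have := (mem_DP.mp hT).1
    simp at this
    omega
  · exact h

def chiZ (r : ℕ) : ℤ := if r % 12 = 1 ∨ r % 12 = 11 then 1 else -1
def pentZ (m : ℕ) : ℤ := if IsSquare (24*m+1) then chiZ (Nat.sqrt (24*m+1)) else 0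

lemma root_shape {m r : ℕ} (hm : 1 ≤ m) (hr : 24*m+1 = r*r) :
    ∃ t, r = 6*t+5 ∨ r = 6*t+7 := by
  obtain ⟨d, q, hlt, rfl⟩ : ∃ d q, q < 6 ∧ r = 6*d + q :=
    ⟨r/6, r%6, Nat.mod_lt _ (by norm_num), by omega⟩
  obtain ⟨A, hA⟩ : ∃ A, (6*d+q)*(6*d+q) = 12*A + q*q := ⟨d*(3*d + q), by ring⟩
  rw [hA] at hr
  interval_cases q
  · omega
  · rcases Nat.eq_zero_or_pos d with rfl | hd
    · simp at hA
      omega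
    · exact ⟨d-1, Or.inr (by omega)⟩
  · omega
  · omega
  · omega
  · exact ⟨d, Or.inl rfl⟩

lemma chi_shape1 (t : ℕ) : chiZ (6*t+5) = (-1:ℤ)^(t+1) := by
  rcases Nat.even_or_odd t with ⟨u, rfl⟩ | ⟨u, rfl⟩
  · rw [chiZ, if_neg (by omega), Odd.neg_one_pow ⟨u, by ring⟩]
  · rw [chiZ, if_pos (by omega), Even.neg_one_pow ⟨u+1, by ring⟩]

lemma chi_shape2 (t : ℕ) : chiZ (6*t+7) = (-1:ℤ)^(t+1) := by
  rcases Nat.even_or_odd t with ⟨u, rfl⟩ | ⟨u, rfl⟩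
  · rw [chiZ, if_neg (by omega), Odd.neg_one_pow ⟨u, by ring⟩]
  · rw [chiZ, if_pos (by omega), Even.neg_one_pow ⟨u+1, by ring⟩]

lemma shape1_m {m u : ℕ} (hsum : (∑ x ∈ Finset.Icc (u+1) (2*u+1), x) = m) :
    24*m+1 = (6*u+5)*(6*u+5) := by
  have h1 := shape1_sum u
  rw [hsum] at h1
  calc 24*m+1 = 12*(m*2)+1 := by ring
    _ = 12*((3*u+2)*(u+1))+1 := by rw [h1]
    _ = (6*u+5)*(6*u+5) := by ring

lemma shape2_m {m u : ℕ} (hsum : (∑ x ∈ Finset.Icc (u+2) (2*u+2), x) = m) :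
    24*m+1 = (6*u+7)*(6*u+7) := by
  have h1 := shape2_sum u
  rw [hsum] at h1
  calc 24*m+1 = 12*(m*2)+1 := by ring
    _ = 12*((3*u+4)*(u+1))+1 := by rw [h1]
    _ = (6*u+7)*(6*u+7) := by ring

lemma shape1_sum_eq {m t : ℕ} (hr : 24*m+1 = (6*t+5)*(6*t+5)) :
    (∑ x ∈ Finset.Icc (t+1) (2*t+1), x) = m := by
  have h1 := shape1_sum t
  obtain ⟨P, hP⟩ : ∃ P, (3*t+2)*(t+1) = P := ⟨_, rfl⟩
  have h2 : (6*t+5)*(6*t+5) = 12*P+1 := by rw [← hP]; ring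
  rw [h2] at hr
  rw [hP] at h1
  omega

lemma shape2_sum_eq {m t : ℕ} (hr : 24*m+1 = (6*t+7)*(6*t+7)) :
    (∑ x ∈ Finset.Icc (t+2) (2*t+2), x) = m := by
  have h1 := shape2_sum t
  obtain ⟨P, hP⟩ : ∃ P, (3*t+4)*(t+1) = P := ⟨_, rfl⟩
  have h2 : (6*t+7)*(6*t+7) = 12*P+1 := by rw [← hP]; ring
  rw [h2] at hr
  rw [hP] at h1
  omega

lemma sum_exc (m : ℕ) (hm : 1 ≤ m) :
    ∑ T ∈ (DP m).filter Exc, (-1:ℤ)^T.card = pentZ m := by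
  by_cases hsq : IsSquare (24*m+1)
  · obtain ⟨r, hr⟩ := hsq
    have hsqrt : Nat.sqrt (24*m+1) = r := by
      rw [hr, show r*r = r^2 from (sq r).symm, Nat.sqrt_eq']
    have hpent : pentZ m = chiZ r := by
      rw [pentZ, if_pos ⟨r, hr⟩, hsqrt]
    obtain ⟨t, ht⟩ := root_shape hm hr
    rcases ht with rfl | rfl
    · have hfil : (DP m).filter Exc = {Finset.Icc (t+1) (2*t+1)} := by
        ext T
        simp only [Finset.mem_filter, Finset.mem_singleton]
        constructor
        · rintro ⟨hDP, hx⟩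
          obtain ⟨hsum, h0⟩ := mem_DP.mp hDP
          obtain ⟨u, hu | hu⟩ := exc_shape T (DP_nonempty hm hDP) h0 hx
          · have h24 : 24*m+1 = (6*u+5)*(6*u+5) := shape1_m (hu ▸ hsum)
            have : 6*u+5 = 6*t+5 := Nat.mul_self_inj.mp (by omega)
            have : u = t := by omega
            rw [hu, this]
          · have h24 : 24*m+1 = (6*u+7)*(6*u+7) := shape2_m (hu ▸ hsum)
            have : 6*u+7 = 6*t+5 := Nat.mul_self_inj.mp (by omega)
            omega
        · rintro rfl
          exact ⟨mem_DP.mpr ⟨shape1_sum_eq hr, shape1_zero t⟩, shape1_exc t⟩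
      rw [hfil, Finset.sum_singleton, shape1_card, hpent, chi_shape1]
    · have hfil : (DP m).filter Exc = {Finset.Icc (t+2) (2*t+2)} := by
        ext T
        simp only [Finset.mem_filter, Finset.mem_singleton]
        constructor
        · rintro ⟨hDP, hx⟩
          obtain ⟨hsum, h0⟩ := mem_DP.mp hDP
          obtain ⟨u, hu | hu⟩ := exc_shape T (DP_nonempty hm hDP) h0 hx
          · have h24 : 24*m+1 = (6*u+5)*(6*u+5) := shape1_m (hu ▸ hsum)
            have : 6*u+5 = 6*t+7 := Nat.mul_self_inj.mp (by omega)
            omega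
          · have h24 : 24*m+1 = (6*u+7)*(6*u+7) := shape2_m (hu ▸ hsum)
            have : 6*u+7 = 6*t+7 := Nat.mul_self_inj.mp (by omega)
            have : u = t := by omega
            rw [hu, this]
        · rintro rfl
          exact ⟨mem_DP.mpr ⟨shape2_sum_eq hr, shape2_zero t⟩, shape2_exc t⟩
      rw [hfil, Finset.sum_singleton, shape2_card, hpent, chi_shape2]
  · have hfil : (DP m).filter Exc = ∅ := by
      rw [Finset.filter_eq_empty_iff]
      intro T hDP hx
      obtain ⟨hsum, h0⟩ := mem_DP.mp hDP
      obtain ⟨u, hu | hu⟩ := exc_shape T (DP_nonempty hm hDP) h0 hx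
      · exact hsq ⟨6*u+5, shape1_m (hu ▸ hsum)⟩
      · exact hsq ⟨6*u+7, shape2_m (hu ▸ hsum)⟩
    rw [hfil, Finset.sum_empty, pentZ, if_neg hsq]

lemma Epn_eq_pent (m : ℕ) (hm : 1 ≤ m) : Epn m = pentZ m := by
  rw [show Epn m = ∑ T ∈ DP m, (-1:ℤ)^T.card from rfl]
  rw [← Finset.sum_filter_add_sum_filter_not (DP m) Exc, sum_exc m hm]
  have hzero : ∑ T ∈ (DP m).filter (fun T => ¬ Exc T), (-1:ℤ)^T.card = 0 := by
    apply Finset.sum_involution (fun T _ => franklin T)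
    · intro T hT
      obtain ⟨hDP, hnx⟩ := Finset.mem_filter.mp hT
      obtain ⟨hsum, h0⟩ := mem_DP.mp hDP
      have hne := DP_nonempty hm hDP
      rcases franklin_card hne h0 hnx with h | h
      · rw [show T.card = (franklin T).card + 1 from h.symm, pow_succ]; ring
      · rw [h, pow_succ]; ring
    · intro T hT _
      obtain ⟨hDP, hnx⟩ := Finset.mem_filter.mp hT
      obtain ⟨hsum, h0⟩ := mem_DP.mp hDP
      have hne := DP_nonempty hm hDP
      intro hc
      rcases franklin_card hne h0 hnx with h | h <;> (rw [hc] at h; omega)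
    · intro T hT
      obtain ⟨hDP, hnx⟩ := Finset.mem_filter.mp hT
      obtain ⟨hsum, h0⟩ := mem_DP.mp hDP
      have hne := DP_nonempty hm hDP
      exact Finset.mem_filter.mpr ⟨mem_DP.mpr
        ⟨by rw [franklin_sum hne h0 hnx, hsum], franklin_zero hne h0 hnx⟩,
        franklin_not_exc hne h0 hnx⟩
    · intro T hT
      obtain ⟨hDP, hnx⟩ := Finset.mem_filter.mp hT
      obtain ⟨hsum, h0⟩ := mem_DP.mp hDP
      exact franklin_franklin (DP_nonempty hm hDP) h0 hnx
  rw [hzero, add_zero]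

lemma sq24 {b : ℕ} (h : b%12 = 1 ∨ b%12 = 5 ∨ b%12 = 7 ∨ b%12 = 11) :
    ∃ k, b*b = 24*k+1 := by
  rcases h with h | h | h | h
  · obtain ⟨q, rfl⟩ : ∃ q, b = 12*q + 1 := ⟨b/12, by omega⟩
    exact ⟨6*q*q + q, by ring⟩
  · obtain ⟨q, rfl⟩ : ∃ q, b = 12*q + 5 := ⟨b/12, by omega⟩
    exact ⟨6*q*q + 5*q + 1, by ring⟩
  · obtain ⟨q, rfl⟩ : ∃ q, b = 12*q + 7 := ⟨b/12, by omega⟩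
    exact ⟨6*q*q + 7*q + 2, by ring⟩
  · obtain ⟨q, rfl⟩ : ∃ q, b = 12*q + 11 := ⟨b/12, by omega⟩
    exact ⟨6*q*q + 11*q + 5, by ring⟩

lemma root_mod {m r : ℕ} (hr : 24*m+1 = r*r) :
    r%12 = 1 ∨ r%12 = 5 ∨ r%12 = 7 ∨ r%12 = 11 := by
  rcases Nat.eq_zero_or_pos m with rfl | hm
  · have h1 : r*r = 1*1 := by omega
    have : r = 1 := Nat.mul_self_inj.mp h1
    omega
  · obtain ⟨t, ht | ht⟩ := root_shape hm hr <;> omega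

lemma Epn_zero : Epn 0 = 1 := by decide

lemma pentZ_zero : pentZ 0 = 1 := by
  have h1 : IsSquare (24*0+1) := ⟨1, by norm_num⟩
  rw [pentZ, if_pos h1]
  norm_num [chiZ]


/-- Lemma 9.3: for `D ≡ 1 (mod 24)` not a perfect square, the sum of
`σ₁((D - b²)/24)` over `0 < b < √D` with `b ≡ 1, 11 (mod 12)` equals the sum
over `0 < b < √D` with `b ≡ 5, 7 (mod 12)`. -/
theorem statement0 (D : ℕ) (hD : 0 < D) (hmod : D % 24 = 1) (hns : ¬ IsSquare D) :
    ∑ b ∈ (Finset.range D).filter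
        (fun b => 0 < b ∧ b ^ 2 < D ∧ (b % 12 = 1 ∨ b % 12 = 11)),
      sigma1 ((D - b ^ 2) / 24)
    = ∑ b ∈ (Finset.range D).filter
        (fun b => 0 < b ∧ b ^ 2 < D ∧ (b % 12 = 5 ∨ b % 12 = 7)),
      sigma1 ((D - b ^ 2) / 24) := by
  obtain ⟨M, rfl⟩ : ∃ M, D = 24*M+1 := ⟨D/24, by omega⟩
  have hM : 1 ≤ M := by
    rcases Nat.eq_zero_or_pos M with rfl | h
    · exact absurd ⟨1, by norm_num⟩ hns
    · exact h
  have hconv := conv M hM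
  have hEpent : ∀ m ∈ Finset.range (M+1), Epn m * sigma1 (M-m) = pentZ m * sigma1 (M-m) := by
    intro m _
    rcases Nat.eq_zero_or_pos m with rfl | h
    · rw [Epn_zero, pentZ_zero]
    · rw [Epn_eq_pent m h]
  have hEM : Epn M = 0 := by
    rw [Epn_eq_pent M hM, pentZ, if_neg hns]
  rw [Finset.sum_congr rfl hEpent, hEM, zero_mul, add_zero] at hconv
  -- restrict to square indices
  have hfil : ∑ m ∈ (Finset.range (M+1)).filter (fun m => IsSquare (24*m+1)),
      pentZ m * sigma1 (M-m) = ∑ m ∈ Finset.range (M+1), pentZ m * sigma1 (M-m) := by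
    apply Finset.sum_filter_of_ne
    intro m _ hne0
    by_contra hC
    rw [pentZ, if_neg hC, zero_mul] at hne0
    exact hne0 rfl
  -- bijection to b-sum
  set Fb : Finset ℕ := (Finset.range (24*M+1)).filter
    (fun b => 0 < b ∧ b ^ 2 < 24*M+1 ∧
      (b % 12 = 1 ∨ b % 12 = 5 ∨ b % 12 = 7 ∨ b % 12 = 11)) with hFb
  have hbij : ∑ m ∈ (Finset.range (M+1)).filter (fun m => IsSquare (24*m+1)),
      pentZ m * sigma1 (M-m) = ∑ b ∈ Fb, chiZ b * sigma1 ((24*M+1 - b^2)/24) := by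
    apply Finset.sum_nbij' (i := fun m => Nat.sqrt (24*m+1)) (j := fun b => (b^2-1)/24)
    · -- hi
      intro m hm
      obtain ⟨hmr, hsq⟩ := Finset.mem_filter.mp hm
      obtain ⟨r, hr⟩ := hsq
      have hrt : Nat.sqrt (24*m+1) = r := by
        rw [hr, show r*r = r^2 from (sq r).symm, Nat.sqrt_eq']
      rw [hrt, hFb, Finset.mem_filter, Finset.mem_range]
      have hr1 : 1 ≤ r := by
        rcases Nat.eq_zero_or_pos r with rfl | h
        · omega
        · exact h
      have hmM : m < M := by
        rcases Nat.lt_or_ge m M with h | h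
        · exact h
        · exfalso
          have : m = M := by
            have := Finset.mem_range.mp hmr; omega
          exact hns ⟨r, by rw [← this]; exact hr⟩
      have hrD : r^2 < 24*M+1 := by
        rw [show r^2 = r*r from sq r, ← hr]; omega
      have hrr : r ≤ r * r := Nat.le_mul_of_pos_left r hr1
      refine ⟨by rw [show r^2 = r*r from sq r] at hrD; omega, hr1, hrD, root_mod hr⟩
    · -- hj
      intro b hb
      rw [hFb, Finset.mem_filter, Finset.mem_range] at hb
      obtain ⟨-, hb0, hbD, hbm⟩ := hb
      obtain ⟨k, hk⟩ := sq24 hbm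
      have hbk : (b^2 - 1)/24 = k := by
        rw [show b^2 = b*b from sq b, hk]; omega
      rw [hbk, Finset.mem_filter, Finset.mem_range]
      constructor
      · rw [show b^2 = b*b from sq b] at hbD; omega
      · exact ⟨b, by omega⟩
    · -- left_inv
      intro m hm
      obtain ⟨-, r, hr⟩ := Finset.mem_filter.mp hm
      have hrt : Nat.sqrt (24*m+1) = r := by
        rw [hr, show r*r = r^2 from (sq r).symm, Nat.sqrt_eq']
      rw [hrt, show r^2 = r*r from sq r]
      omega
    · -- right_inv
      intro b hb
      rw [hFb, Finset.mem_filter, Finset.mem_range] at hb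
      obtain ⟨-, hb0, hbD, hbm⟩ := hb
      obtain ⟨k, hk⟩ := sq24 hbm
      have hbk : (b^2 - 1)/24 = k := by
        rw [show b^2 = b*b from sq b, hk]; omega
      rw [hbk]
      have : 24*k+1 = b*b := hk.symm
      rw [show (24*k+1 : ℕ) = b*b from this, show b*b = b^2 from (sq b).symm, Nat.sqrt_eq']
    · -- summand
      intro m hm
      obtain ⟨hmr, r, hr⟩ := Finset.mem_filter.mp hm
      have hrt : Nat.sqrt (24*m+1) = r := by
        rw [hr, show r*r = r^2 from (sq r).symm, Nat.sqrt_eq']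
      rw [hrt, pentZ, if_pos ⟨r, hr⟩, hrt]
      have hle : 24*m+1 ≤ 24*M+1 := by
        have := Finset.mem_range.mp hmr; omega
      have harg : (24*M+1 - r^2)/24 = M - m := by
        rw [show r^2 = r*r from sq r, ← hr]
        omega
      rw [harg]
  rw [← hfil, hbij] at hconv
  -- split by character
  have hsplit := Finset.sum_filter_add_sum_filter_not Fb
    (fun b => b % 12 = 1 ∨ b % 12 = 11) (fun b => chiZ b * sigma1 ((24*M+1 - b^2)/24))
  have hpos : Fb.filter (fun b => b % 12 = 1 ∨ b % 12 = 11)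
      = (Finset.range (24*M+1)).filter
        (fun b => 0 < b ∧ b ^ 2 < 24*M+1 ∧ (b % 12 = 1 ∨ b % 12 = 11)) := by
    rw [hFb, Finset.filter_filter]
    apply Finset.filter_congr
    intro b _
    constructor
    · rintro ⟨⟨h1, h2, -⟩, h4⟩; exact ⟨h1, h2, h4⟩
    · rintro ⟨h1, h2, h4⟩; exact ⟨⟨h1, h2, by omega⟩, h4⟩
  have hneg : Fb.filter (fun b => ¬(b % 12 = 1 ∨ b % 12 = 11))
      = (Finset.range (24*M+1)).filter
        (fun b => 0 < b ∧ b ^ 2 < 24*M+1 ∧ (b % 12 = 5 ∨ b % 12 = 7)) := by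
    rw [hFb, Finset.filter_filter]
    apply Finset.filter_congr
    intro b _
    constructor
    · rintro ⟨⟨h1, h2, h3⟩, h4⟩; exact ⟨h1, h2, by omega⟩
    · rintro ⟨h1, h2, h4⟩; exact ⟨⟨h1, h2, by omega⟩, by omega⟩
  have hposval : ∑ b ∈ Fb.filter (fun b => b % 12 = 1 ∨ b % 12 = 11),
      chiZ b * sigma1 ((24*M+1 - b^2)/24)
      = ∑ b ∈ Fb.filter (fun b => b % 12 = 1 ∨ b % 12 = 11),
        (sigma1 ((24*M+1 - b^2)/24) : ℤ) := by
    apply Finset.sum_congr rfl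
    intro b hb
    obtain ⟨-, hc⟩ := Finset.mem_filter.mp hb
    rw [chiZ, if_pos hc, one_mul]
  have hnegval : ∑ b ∈ Fb.filter (fun b => ¬(b % 12 = 1 ∨ b % 12 = 11)),
      chiZ b * sigma1 ((24*M+1 - b^2)/24)
      = - ∑ b ∈ Fb.filter (fun b => ¬(b % 12 = 1 ∨ b % 12 = 11)),
        (sigma1 ((24*M+1 - b^2)/24) : ℤ) := by
    rw [← Finset.sum_neg_distrib]
    apply Finset.sum_congr rfl
    intro b hb
    obtain ⟨-, hc⟩ := Finset.mem_filter.mp hb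
    rw [chiZ, if_neg hc]
    ring
  rw [← hsplit, hposval, hnegval, hpos, hneg] at hconv
  have := sub_eq_zero.mp (by linarith [hconv] :
    (∑ b ∈ (Finset.range (24*M+1)).filter
        (fun b => 0 < b ∧ b ^ 2 < 24*M+1 ∧ (b % 12 = 1 ∨ b % 12 = 11)),
      (sigma1 ((24*M+1 - b^2)/24) : ℤ))
    - ∑ b ∈ (Finset.range (24*M+1)).filter
        (fun b => 0 < b ∧ b ^ 2 < 24*M+1 ∧ (b % 12 = 5 ∨ b % 12 = 7)),
      (sigma1 ((24*M+1 - b^2)/24) : ℤ) = 0)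
  exact_mod_cast this
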